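/- If the initial and final states are Gibbs thermal states at temperature T with partition functions Z_p and Z_q respectively, then the ε-risk extractable work is W^ε = kT ln(Z_q/Z_p) + kT ln(1/(1-ε)). -/

import Mathlib

open MeasureTheory Set

/-- The set of admissible mixing factors in the definition of relative mixedness. -/
noncomputable def mixSet (f g : ℝ → ℝ) : Set ℝ :=
  {m | 0 < m ∧ ∀ l : ℝ, 0 ≤ l → ∫ x in (0:ℝ)..(l * m), g x ≤ ∫ x in (0:ℝ)..l, f x}

/-- The relative mixedness `M(f‖g)`. -/
noncomputable def relMix (f g : ℝ → ℝ) : ℝ := sSup (mixSet f g)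

lemma integ_ind (Z c l : ℝ) (hl : 0 ≤ l) (hZ : 0 ≤ Z) :
    ∫ x in (0:ℝ)..l, Set.indicator (Set.Ioc (0:ℝ) Z) (fun _ => c) x = c * min l Z := by
  rw [intervalIntegral.integral_of_le hl, MeasureTheory.setIntegral_indicator measurableSet_Ioc]
  rw [Set.Ioc_inter_Ioc, max_self, setIntegral_const]
  rw [measureReal_def, Real.volume_Ioc]
  rw [smul_eq_mul, mul_comm]
  congr 1
  rw [ENNReal.toReal_ofReal (by simp [hl, hZ] : (0:ℝ) ≤ min l Z - 0)]
  rw [sub_zero]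

/-- If the initial and final states are Gibbs thermal states with partition functions
`Zp` and `Zq` (whose Gibbs rescalings are the uniform densities `1/Zp` on `(0,Zp]`
and `1/Zq` on `(0,Zq]`), the ε-risk extractable work is
`W^ε = kT ln(Zq/Zp) + kT ln(1/(1-ε))`. -/
theorem work_between_gibbs_states
    (k T Zp Zq ε : ℝ) (hk : 0 < k) (hT : 0 < T)
    (hZp : 0 < Zp) (hZq : 0 < Zq) (hε0 : 0 ≤ ε) (hε1 : ε < 1) :
    k * T * Real.log (relMix
        (fun x => (Set.indicator (Set.Ioc (0:ℝ) Zp) (fun _ => 1 / Zp) x) / (1 - ε))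
        (Set.indicator (Set.Ioc (0:ℝ) Zq) (fun _ => 1 / Zq)))
      = k * T * Real.log (Zq / Zp) + k * T * Real.log (1 / (1 - ε)) := by
  have hε : 0 < 1 - ε := by linarith
  set m₀ : ℝ := Zq / (Zp * (1 - ε)) with hm₀
  have hm₀pos : 0 < m₀ := div_pos hZq (mul_pos hZp hε)
  have hf : ∀ l : ℝ, 0 ≤ l →
      ∫ x in (0:ℝ)..l,
        (Set.indicator (Set.Ioc (0:ℝ) Zp) (fun _ => 1 / Zp) x) / (1 - ε)
        = (1 / Zp) * min l Zp / (1 - ε) := by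
    intro l hl
    rw [intervalIntegral.integral_div, integ_ind Zp (1/Zp) l hl hZp.le]
  -- membership of m₀
  have hmem : m₀ ∈ mixSet
      (fun x => (Set.indicator (Set.Ioc (0:ℝ) Zp) (fun _ => 1 / Zp) x) / (1 - ε))
      (Set.indicator (Set.Ioc (0:ℝ) Zq) (fun _ => 1 / Zq)) := by
    refine ⟨hm₀pos, fun l hl => ?_⟩
    rw [hf l hl, integ_ind Zq (1/Zq) (l * m₀) (by positivity) hZq.le]
    rcases le_or_gt l Zp with h | h
    · rw [min_eq_left h]
      have h1 : (1/Zq) * min (l * m₀) Zq ≤ (1/Zq) * (l * m₀) := by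
        apply mul_le_mul_of_nonneg_left (min_le_left _ _) (by positivity)
      refine h1.trans (le_of_eq ?_)
      rw [hm₀]
      field_simp
    · rw [min_eq_right h.le]
      have h1 : (1/Zq) * min (l * m₀) Zq ≤ (1/Zq) * Zq := by
        apply mul_le_mul_of_nonneg_left (min_le_right _ _) (by positivity)
      refine h1.trans ?_
      rw [one_div_mul_cancel hZq.ne', one_div_mul_cancel hZp.ne', le_div_iff₀ hε]
      linarith
  -- upper bound
  have hub : ∀ m ∈ mixSet
      (fun x => (Set.indicator (Set.Ioc (0:ℝ) Zp) (fun _ => 1 / Zp) x) / (1 - ε))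
      (Set.indicator (Set.Ioc (0:ℝ) Zq) (fun _ => 1 / Zq)), m ≤ m₀ := by
    rintro m ⟨hmpos, hcond⟩
    set l : ℝ := min Zp (Zq / m) with hld
    have hlpos : 0 < l := lt_min hZp (div_pos hZq hmpos)
    have h1 := hcond l hlpos.le
    rw [hf l hlpos.le, integ_ind Zq (1/Zq) (l * m) (by positivity) hZq.le] at h1
    have hlZp : l ≤ Zp := min_le_left _ _
    have hlm : l * m ≤ Zq := by
      rw [← le_div_iff₀ hmpos]; exact min_le_right _ _
    rw [min_eq_left hlm, min_eq_left hlZp] at h1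
    -- h1 : 1/Zq * (l*m) ≤ 1/Zp * l / (1-ε)
    rw [hm₀, le_div_iff₀ (mul_pos hZp hε)]
    have := mul_le_mul_of_nonneg_left h1 (by positivity : (0:ℝ) ≤ Zq * (1 - ε))
    calc m * (Zp * (1 - ε)) = (Zq * (1 - ε)) * (1/Zq * (l * m)) * (Zp / l) := by
          field_simp
      _ ≤ (Zq * (1 - ε)) * (1/Zp * l / (1 - ε)) * (Zp / l) := by
          apply mul_le_mul_of_nonneg_right this (by positivity)
      _ = Zq := by field_simp
  have hsup : relMix
      (fun x => (Set.indicator (Set.Ioc (0:ℝ) Zp) (fun _ => 1 / Zp) x) / (1 - ε))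
      (Set.indicator (Set.Ioc (0:ℝ) Zq) (fun _ => 1 / Zq)) = m₀ := by
    apply le_antisymm
    · exact csSup_le ⟨m₀, hmem⟩ hub
    · exact le_csSup ⟨m₀, hub⟩ hmem
  rw [hsup, hm₀]
  have : Zq / (Zp * (1 - ε)) = (Zq / Zp) * (1 / (1 - ε)) := by field_simp
  rw [this, Real.log_mul (by positivity) (by positivity), mul_add]
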